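/- For all integers n ≥ 1 and k ≥ 2, the following identity holds in K = ℚ(q): ( ∑_{j=0}^{⌈(n−4)/2⌉} s(n,k,j) ) · (q;q²)_n · q · (1−q^{2k−1})(1−q^{2k−2})(1−q^{9−2k}) / ( (1−q)(1−q³)(1−q⁵) ) − (1−q^{2k−1})·(q³;q²)_{n−1} − (−1)^n · q^{(−1+(−1)^n+2k−2(−1)^n k+2n−4kn+4n²)/4} · (q^{2k−2n};q²)_n + (q;q²)_n + χ(n)·(1−q^{2k−1})·q^{n(2n−2k+1)/2}·(q^{2k−2n+2};q²)_{n−1} = 0, where χ(n) = 1 if n is even and χ(n) = 0 if n is odd, the sum is empty when ⌈(n−4)/2⌉ < 0, and the summand is s(n,k,j) = [ (q^{−2k+6};q⁴)_j · (q^{−2k+4};q⁴)_j · (q^{17−2k};q⁸)_j ] / [ (q⁷;q⁴)_j · (q⁹;q⁴)_j · (q^{9−2k};q⁸)_j ] · q^{(2k−1)j}. -/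
import Mathlib


noncomputable section

/-- The field `K = ℚ(q)` of rational functions over `ℚ`. -/
abbrev K : Type := RatFunc ℚ

/-- The indeterminate `q`. -/
def q : K := RatFunc.X

/-- The `q`-integer `[m]_q = (1 - q^m)/(1 - q)`, for any integer `m`. -/
def qint (m : ℤ) : K := (1 - q ^ m) / (1 - q)

/-- The `q`-factorial `[n]_q! = [1]_q [2]_q ⋯ [n]_q`. -/
def qfact : ℕ → K
  | 0 => 1
  | n + 1 => qfact n * qint (n + 1)

/-- `b 0 = 0` and `b n = [2n-1]_q q^{(-1)^(n-1) n(n-1)/2 - n + 1}` for `n ≥ 1`. -/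
def b (n : ℕ) : K :=
  if n = 0 then 0
  else qint (2 * n - 1) *
    q ^ ((-1 : ℤ) ^ (n - 1) * ((n : ℤ) * ((n : ℤ) - 1) / 2) - (n : ℤ) + 1)

/-- `A m` is the polynomial `A_{m-1}` of the paper (index shifted by one, so
`A 0 = A_{-1} = 1`, `A 1 = A_0 = 0`). -/
def A : ℕ → Polynomial K
  | 0 => 1
  | 1 => 0
  | (n + 2) => Polynomial.C (b (n + 1)) * A (n + 1) - Polynomial.X ^ 2 * A n

/-- `B m` is the polynomial `B_{m-1}` of the paper (index shifted by one, so
`B 0 = B_{-1} = 0`, `B 1 = B_0 = 1`). -/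
def B : ℕ → Polynomial K
  | 0 => 0
  | 1 => 1
  | (n + 2) => Polynomial.C (b (n + 1)) * B (n + 1) - Polynomial.X ^ 2 * B n

/-- `c n j` is the coefficient of `z^(2j)` in `A_n` (and `0` for `j < 0`). -/
def c (n : ℤ) (j : ℤ) : K :=
  if j < 0 then 0 else (A (n + 1).toNat).coeff (2 * j).toNat

/-- `d n j` is the coefficient of `z^(2j)` in `B_n` (and `0` for `j < 0`). -/
def d (n : ℤ) (j : ℤ) : K :=
  if j < 0 then 0 else (B (n + 1).toNat).coeff (2 * j).toNat

/-- `sin_q(z) = ∑ (-1)^n q^(n^2) z^(2n+1)/[2n+1]_q!` as a formal power series. -/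
def sinq : PowerSeries K :=
  PowerSeries.mk fun m =>
    if m % 2 = 1 then (-1 : K) ^ (m / 2) * q ^ ((m / 2) ^ 2) / qfact m else 0

/-- `cos_q(z) = ∑ (-1)^n q^(n^2) z^(2n)/[2n]_q!` as a formal power series. -/
def cosq : PowerSeries K :=
  PowerSeries.mk fun m =>
    if m % 2 = 0 then (-1 : K) ^ (m / 2) * q ^ ((m / 2) ^ 2) / qfact m else 0

/-- The `q`-Pochhammer symbol `(a; p)_m = (1-a)(1-ap)⋯(1-ap^(m-1))`. -/
def qpoch (a p : K) : ℕ → K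
  | 0 => 1
  | m + 1 => qpoch a p m * (1 - a * p ^ m)


lemma hq : q ≠ 0 := RatFunc.X_ne_zero

lemma intDegree_q_pow (n : ℕ) : (q ^ n : K).intDegree = n := by
  induction n with
  | zero => simp [RatFunc.intDegree_one]
  | succ n ih =>
    rw [pow_succ, RatFunc.intDegree_mul (pow_ne_zero _ hq) hq, ih,
      show (q : K).intDegree = 1 from RatFunc.intDegree_X]
    push_cast; ring

lemma q_pow_ne_one {n : ℕ} (h : n ≠ 0) : (q ^ n : K) ≠ 1 := by
  intro he
  have := intDegree_q_pow n
  rw [he, RatFunc.intDegree_one] at this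
  omega

lemma q_zpow_ne_one {m : ℤ} (h : m ≠ 0) : (q ^ m : K) ≠ 1 := by
  rcases lt_trichotomy m 0 with hm | hm | hm
  · intro he
    have h2 : (q ^ (-m) : K) = 1 := by rw [zpow_neg, he, inv_one]
    rw [show -m = (((-m).toNat : ℤ)) by omega, zpow_natCast] at h2
    exact q_pow_ne_one (by omega) h2
  · omega
  · intro he
    rw [show m = ((m.toNat : ℤ)) by omega, zpow_natCast] at he
    exact q_pow_ne_one (by omega) he

lemma one_sub_q_zpow_ne {m : ℤ} (h : m ≠ 0) : (1 - q ^ m : K) ≠ 0 :=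
  sub_ne_zero.mpr (Ne.symm (q_zpow_ne_one h))

/-- combine two powers -/
lemma qq {a b c d : ℤ} (h : a + b = c + d) : (q:K)^a * q^b = q^c * q^d := by
  rw [← zpow_add₀ hq, ← zpow_add₀ hq, h]

lemma q_split {a b c : ℤ} (h : a = b + c) : (q:K)^a = q^b * q^c := by
  rw [← zpow_add₀ hq, h]

/-- `Qp a c m = (q^a; q^c)_m`. -/
def Qp (a c : ℤ) (m : ℕ) : K := qpoch (q^a) (q^c) m

lemma Qp_zero (a c : ℤ) : Qp a c 0 = 1 := rfl

lemma Qp_succ (a c e : ℤ) (m : ℕ) (h : e = a + c * m) :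
    Qp a c (m+1) = Qp a c m * (1 - q^e) := by
  show qpoch _ _ m * (1 - q^a * (q^c)^m) = _
  rw [← zpow_natCast ((q:K)^c) m, ← zpow_mul, ← zpow_add₀ hq, ← h]
  rfl

lemma Qp_shift (a a' c : ℤ) (m : ℕ) (h : a' = a + c) :
    Qp a c (m+1) = (1 - q^a) * Qp a' c m := by
  subst h
  induction m with
  | zero => rw [Qp_succ a c a 0 (by push_cast; ring), Qp_zero, Qp_zero]; ring
  | succ m ih =>
    rw [Qp_succ a c (a + c*(m+1)) (m+1) (by push_cast; ring), ih,
      Qp_succ (a+c) c (a + c*(m+1)) m (by push_cast; ring)]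
    ring

lemma Qp_ne_zero (a c : ℤ) (m : ℕ) (h : ∀ i : ℕ, i < m → a + c * i ≠ 0) :
    Qp a c m ≠ 0 := by
  induction m with
  | zero => exact one_ne_zero
  | succ m ih =>
    rw [Qp_succ a c (a + c*m) m rfl]
    exact mul_ne_zero (ih fun i hi => h i (by omega))
      (one_sub_q_zpow_ne (h m (by omega)))

def E (n : ℕ) (k : ℤ) : ℤ :=
  (-1 + (-1:ℤ)^n + 2*k - 2*(-1:ℤ)^n*k + 2*(n:ℤ) - 4*k*(n:ℤ) + 4*(n:ℤ)^2)/4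
def F (n : ℕ) (k : ℤ) : ℤ := (n:ℤ) * (2*(n:ℤ) - 2*k + 1) / 2

lemma E_odd (t : ℕ) (k : ℤ) : E (2*t+1) k = 4*t^2 + 5*t + 1 - 2*k*t := by
  have h1 : ((-1:ℤ))^(2*t+1) = -1 := Odd.neg_one_pow ⟨t, by ring⟩
  rw [E, h1, show (-1 + (-1:ℤ) + 2*k - 2*(-1)*k + 2*((2*t+1:ℕ):ℤ) - 4*k*((2*t+1:ℕ):ℤ)
      + 4*((2*t+1:ℕ):ℤ)^2) = 4*(4*(t:ℤ)^2 + 5*t + 1 - 2*k*t) by push_cast; ring,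
    Int.mul_ediv_cancel_left _ (by norm_num)]

lemma E_even (t : ℕ) (k : ℤ) : E (2*t+2) k = 4*t^2 + 9*t + 5 - 2*k*t - 2*k := by
  have h1 : ((-1:ℤ))^(2*t+2) = 1 := Even.neg_one_pow ⟨t+1, by ring⟩
  rw [E, h1, show (-1 + (1:ℤ) + 2*k - 2*1*k + 2*((2*t+2:ℕ):ℤ) - 4*k*((2*t+2:ℕ):ℤ)
      + 4*((2*t+2:ℕ):ℤ)^2) = 4*(4*(t:ℤ)^2 + 9*t + 5 - 2*k*t - 2*k) by push_cast; ring,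
    Int.mul_ediv_cancel_left _ (by norm_num)]

lemma F_even (t : ℕ) (k : ℤ) : F (2*t+2) k = 4*t^2 + 9*t + 5 - 2*k*t - 2*k := by
  rw [F, show ((2*t+2:ℕ):ℤ) * (2*((2*t+2:ℕ):ℤ) - 2*k + 1)
      = 2*(4*(t:ℤ)^2 + 9*t + 5 - 2*k*t - 2*k) by push_cast; ring,
    Int.mul_ediv_cancel_left _ (by norm_num)]

def SS (k : ℤ) (m : ℕ) : K :=
  ∑ j ∈ Finset.range m,
        qpoch (q ^ (-2 * k + 6)) (q ^ 4) j * qpoch (q ^ (-2 * k + 4)) (q ^ 4) j *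
          qpoch (q ^ (17 - 2 * k)) (q ^ 8) j /
        (qpoch (q ^ 7) (q ^ 4) j * qpoch (q ^ 9) (q ^ 4) j *
          qpoch (q ^ (9 - 2 * k)) (q ^ 8) j) *
        q ^ ((2 * k - 1) * (j : ℤ))

def PF (k : ℤ) (n : ℕ) : K :=
  qpoch q (q ^ 2) n * q * (1 - q ^ (2 * k - 1)) * (1 - q ^ (2 * k - 2)) *
        (1 - q ^ (9 - 2 * k)) / ((1 - q) * (1 - q ^ 3) * (1 - q ^ 5))

def RT (k : ℤ) (n : ℕ) : K :=
  (1 - q ^ (2 * k - 1)) * qpoch (q ^ 3) (q ^ 2) (n - 1)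
  + (-1 : K) ^ n * q ^ (E n k) * qpoch (q ^ (2 * k - 2 * (n : ℤ))) (q ^ 2) n
  - qpoch q (q ^ 2) n
  - (if Even n then (1 : K) else 0) * (1 - q ^ (2 * k - 1)) * q ^ (F n k) *
        qpoch (q ^ (2 * k - 2 * (n : ℤ) + 2)) (q ^ 2) (n - 1)

def Np (k : ℤ) (t : ℕ) : K := Qp (-2*k+6) 4 t * Qp (-2*k+4) 4 t * Qp (17-2*k) 8 t
def Dp (k : ℤ) (t : ℕ) : K := Qp 7 4 t * Qp 9 4 t * Qp (9-2*k) 8 t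

lemma qpow_nat_int (n : ℕ) : (q:K) ^ n = q ^ (n:ℤ) := (zpow_natCast q n).symm

lemma qpoch_qq (m : ℕ) : qpoch q (q ^ 2) m = Qp 1 2 m := by
  simp only [Qp, zpow_ofNat, pow_one]

lemma qpoch_q3 (m : ℕ) : qpoch (q ^ 3) (q ^ 2) m = Qp 3 2 m := by
  simp only [Qp, zpow_ofNat, pow_one]

lemma qpoch_qz (a : ℤ) (m : ℕ) : qpoch (q ^ a) (q ^ 2) m = Qp a 2 m := by
  simp only [Qp, zpow_ofNat]

lemma PF_eq (k : ℤ) (n : ℕ) :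
    PF k n = Qp 1 2 n * q^(1:ℤ) * (1-q^(2*k-1)) * (1-q^(2*k-2)) * (1-q^(9-2*k)) /
      ((1-q^(1:ℤ))*(1-q^(3:ℤ))*(1-q^(5:ℤ))) := by
  simp only [PF, qpoch_qq, zpow_ofNat, pow_one]

lemma summand_eq (k : ℤ) (j : ℕ) :
    qpoch (q ^ (-2 * k + 6)) (q ^ 4) j * qpoch (q ^ (-2 * k + 4)) (q ^ 4) j *
          qpoch (q ^ (17 - 2 * k)) (q ^ 8) j /
        (qpoch (q ^ 7) (q ^ 4) j * qpoch (q ^ 9) (q ^ 4) j *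
          qpoch (q ^ (9 - 2 * k)) (q ^ 8) j) *
        q ^ ((2 * k - 1) * (j : ℤ))
      = Np k j / Dp k j * q ^ ((2 * k - 1) * (j : ℤ)) := by
  simp only [Np, Dp, Qp, zpow_ofNat]

lemma Dp_ne_zero (k : ℤ) (t : ℕ) : Dp k t ≠ 0 := by
  refine mul_ne_zero (mul_ne_zero ?_ ?_) ?_ <;>
    refine Qp_ne_zero _ _ _ fun i _ => ?_ <;> omega


lemma qmul {a b c : ℤ} (h : a + b = c) : (q:K)^a * q^b = q^c := by
  rw [← zpow_add₀ hq, h]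

lemma q_flip {a b : ℤ} (h : a + b = 0) : (1:K) - q^a = -(q^a * (1 - q^b)) := by
  have h1 : (q:K)^a * q^b = 1 := by rw [← zpow_add₀ hq, h, zpow_zero]
  linear_combination -h1

lemma q_subflip {a b c : ℤ} (h : b = a + c) : (q:K)^a - q^b = q^a * (1 - q^c) := by
  have h1 : (q:K)^a * q^c = q^b := qmul (by omega)
  linear_combination h1

lemma q_subflip2 {a b c : ℤ} (h : a = b + c) : (q:K)^a - q^b = -(q^b * (1 - q^c)) := by
  have h1 : (q:K)^b * q^c = q^a := qmul (by omega)
  linear_combination -h1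

lemma q_zpow_inj {a b : ℤ} (h : (q:K)^a = q^b) : a = b := by
  by_contra hne
  have h1 : (q:K)^(a-b) = 1 := by
    rw [zpow_sub₀ hq, h, div_self (zpow_ne_zero _ hq)]
  exact q_zpow_ne_one (by omega) h1

lemma q_sub_ne {a b : ℤ} (h : a ≠ b) : (q:K)^a - q^b ≠ 0 := fun hc =>
  h (q_zpow_inj (sub_eq_zero.mp hc))

lemma Qp_succ' (a c e : ℤ) (m m' : ℕ) (hm : m' = m + 1) (h : e = a + c * m) :
    Qp a c m' = Qp a c m * (1 - q^e) := hm ▸ Qp_succ a c e m h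

lemma Qp_shift' (a a' c : ℤ) (m m' : ℕ) (hm : m' = m + 1) (h : a' = a + c) :
    Qp a c m' = (1 - q^a) * Qp a' c m := hm ▸ Qp_shift a a' c m h

lemma Qp_one (a c : ℤ) : Qp a c 1 = 1 - q^a := by
  rw [Qp_succ' a c a 0 1 rfl (by push_cast; ring), Qp_zero, one_mul]

lemma PF_succ (k : ℤ) (n : ℕ) : PF k (n+1) = PF k n * (1 - q^(2*(n:ℤ)+1)) := by
  rw [PF_eq, PF_eq, Qp_succ 1 2 (2*(n:ℤ)+1) n (by ring)]
  ring

lemma RT_odd (t : ℕ) (k : ℤ) : RT k (2*t+1) =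
    (1 - q^(2*k-1)) * Qp 3 2 (2*t)
    - q^(4*(t:ℤ)^2+5*(t:ℤ)+1-2*k*(t:ℤ)) * Qp (2*k-4*(t:ℤ)-2) 2 (2*t+1)
    - Qp 1 2 (2*t+1) := by
  rw [RT, E_odd]
  rw [show (2*t+1)-1 = 2*t by omega]
  rw [show 2*k - 2*((2*t+1:ℕ):ℤ) = 2*k-4*(t:ℤ)-2 by push_cast; ring]
  rw [if_neg (by simp [parity_simps] : ¬ Even (2*t+1))]
  rw [show ((-1:K))^(2*t+1) = -1 from Odd.neg_one_pow ⟨t, by ring⟩]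
  rw [qpoch_q3, qpoch_qq]
  simp only [qpoch_qz]
  ring

lemma RT_even (t : ℕ) (k : ℤ) : RT k (2*t+2) =
    (1 - q^(2*k-1)) * Qp 3 2 (2*t+1)
    + q^(4*(t:ℤ)^2+9*(t:ℤ)+5-2*k*(t:ℤ)-2*k) * Qp (2*k-4*(t:ℤ)-4) 2 (2*t+2)
    - Qp 1 2 (2*t+2)
    - (1 - q^(2*k-1)) * q^(4*(t:ℤ)^2+9*(t:ℤ)+5-2*k*(t:ℤ)-2*k) *
        Qp (2*k-4*(t:ℤ)-2) 2 (2*t+1) := by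
  rw [RT, E_even, F_even]
  rw [show (2*t+2)-1 = 2*t+1 by omega]
  rw [show 2*k - 2*((2*t+2:ℕ):ℤ) = 2*k-4*(t:ℤ)-4 by push_cast; ring]
  rw [show 2*k-4*(t:ℤ)-4+2 = 2*k-4*(t:ℤ)-2 by ring]
  have he : (if Even (2*t+2) then (1:K) else 0) = 1 := if_pos ⟨t+1, by ring⟩
  rw [he]
  rw [show ((-1:K))^(2*t+2) = 1 from Even.neg_one_pow ⟨t+1, by ring⟩]
  rw [qpoch_q3, qpoch_qq]
  simp only [qpoch_qz]
  ring

lemma RT_odd3 (t : ℕ) (k : ℤ) : RT k (2*t+3) =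
    (1 - q^(2*k-1)) * Qp 3 2 (2*t+2)
    - q^(4*(t:ℤ)^2+13*(t:ℤ)+10-2*k*(t:ℤ)-2*k) * Qp (2*k-4*(t:ℤ)-6) 2 (2*t+3)
    - Qp 1 2 (2*t+3) := by
  have h := RT_odd (t+1) k
  rw [show 2*(t+1)+1 = 2*t+3 by omega, show 2*(t+1) = 2*t+2 by omega] at h
  push_cast at h
  rw [h, show 4*((t:ℤ)+1)^2+5*((t:ℤ)+1)+1-2*k*((t:ℤ)+1)
      = 4*(t:ℤ)^2+13*(t:ℤ)+10-2*k*(t:ℤ)-2*k by ring,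
    show 2*k-4*((t:ℤ)+1)-2 = 2*k-4*(t:ℤ)-6 by ring]

lemma G_base (k : ℤ) : SS k 0 * PF k (2*0+1) = RT k (2*0+1) := by
  have h0 : SS k 0 = 0 := by simp [SS]
  rw [h0, zero_mul, RT_odd]
  norm_num
  rw [Qp_zero, Qp_one, Qp_one, zpow_one]
  have h1 : (q:K)^(2*k-1) = q * q^(2*k-2) := by
    rw [q_split (show 2*k-1 = 1 + (2*k-2) by ring), zpow_one]
  linear_combination h1

lemma step_odd (t : ℕ) (k : ℤ) (ih : SS k t * PF k (2*t+1) = RT k (2*t+1)) :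
    SS k t * PF k (2*t+2) = RT k (2*t+2) := by
  have hp : PF k (2*t+2) = PF k (2*t+1) * (1 - q^(4*(t:ℤ)+3)) := by
    have h := PF_succ k (2*t+1)
    rw [show (2*t+1)+1 = 2*t+2 by omega,
      show 2*((2*t+1:ℕ):ℤ)+1 = 4*(t:ℤ)+3 by push_cast; ring] at h
    exact h
  rw [hp, ← mul_assoc, ih, RT_odd, RT_even]
  rw [Qp_succ' 3 2 (4*(t:ℤ)+3) (2*t) (2*t+1) rfl (by push_cast; ring)]
  rw [Qp_shift' (2*k-4*(t:ℤ)-4) (2*k-4*(t:ℤ)-2) 2 (2*t+1) (2*t+2) rfl (by ring)]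
  rw [Qp_succ' 1 2 (4*(t:ℤ)+3) (2*t+1) (2*t+2) rfl (by push_cast; ring)]
  have hA : (q:K)^(4*(t:ℤ)^2+9*(t:ℤ)+5-2*k*(t:ℤ)-2*k) * q^(2*k-1)
      = q^(4*(t:ℤ)^2+5*(t:ℤ)+1-2*k*(t:ℤ)) * q^(4*(t:ℤ)+3) := qq (by ring)
  have hB : (q:K)^(4*(t:ℤ)^2+9*(t:ℤ)+5-2*k*(t:ℤ)-2*k) * q^(2*k-4*(t:ℤ)-4)
      = q^(4*(t:ℤ)^2+5*(t:ℤ)+1-2*k*(t:ℤ)) := qmul (by ring)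
  linear_combination (Qp (2*k-4*(t:ℤ)-2) 2 (2*t+1)) * hB
    - (Qp (2*k-4*(t:ℤ)-2) 2 (2*t+1)) * hA

lemma Np_succ (k : ℤ) (t : ℕ) : Np k (t+1) = Np k t *
    ((1-q^(4*(t:ℤ)+6-2*k))*(1-q^(4*(t:ℤ)+4-2*k))*(1-q^(8*(t:ℤ)+17-2*k))) := by
  rw [Np, Np,
    Qp_succ (-2*k+6) 4 (4*(t:ℤ)+6-2*k) t (by ring),
    Qp_succ (-2*k+4) 4 (4*(t:ℤ)+4-2*k) t (by ring),
    Qp_succ (17-2*k) 8 (8*(t:ℤ)+17-2*k) t (by ring)]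
  ring

lemma Dp_succ (k : ℤ) (t : ℕ) : Dp k (t+1) = Dp k t *
    ((1-q^(4*(t:ℤ)+7))*(1-q^(4*(t:ℤ)+9))*(1-q^(8*(t:ℤ)+9-2*k))) := by
  rw [Dp, Dp,
    Qp_succ 7 4 (4*(t:ℤ)+7) t (by ring),
    Qp_succ 9 4 (4*(t:ℤ)+9) t (by ring),
    Qp_succ (9-2*k) 8 (8*(t:ℤ)+9-2*k) t (by ring)]
  ring

lemma starlem (t : ℕ) (k : ℤ) :
    Qp (2*k-4*(t:ℤ)-2) 2 (2*t+1) * q^(4*(t:ℤ)^2+9*(t:ℤ)+5-2*k*(t:ℤ)-2*k) *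
      (q^(2*k-4*(t:ℤ)-4) - q^(4*(t:ℤ)+5)) *
      ((1-q^(1:ℤ))*(1-q^(3:ℤ))*(1-q^(5:ℤ))) * Dp k t
    = Qp 1 2 (2*t+3) * q^(1:ℤ) * (1-q^(2*k-2)) * (1-q^(9-2*k)) * Np k t *
      q^((2*k-1)*(t:ℤ)) := by
  induction t with
  | zero =>
    simp only [Nat.cast_zero]
    rw [show (4*(0:ℤ)^2+9*0+5-2*k*0-2*k) = 5-2*k by ring,
      show (2*k-4*(0:ℤ)-2) = 2*k-2 by ring,
      show (2*k-4*(0:ℤ)-4) = 2*k-4 by ring,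
      show (4*(0:ℤ)+5) = 5 by ring,
      show ((2*k-1)*(0:ℤ)) = 0 by ring, zpow_zero,
      show 2*0+1 = 1 by norm_num, show 2*0+3 = 3 by norm_num]
    rw [Np, Dp]
    simp only [Qp_zero]
    rw [Qp_one,
      Qp_succ' 1 2 5 2 3 rfl (by push_cast),
      Qp_succ' 1 2 3 1 2 rfl (by push_cast),
      Qp_one]
    have h1 : (q:K)^(5-2*k) * q^(2*k-4) = q^(1:ℤ) := qmul (by ring)
    have h2 : (q:K)^(5-2*k) * q^(5:ℤ) = q^(1:ℤ) * q^(9-2*k) := qq (by ring)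
    linear_combination ((1-q^(2*k-2))*(1-q^(1:ℤ))*(1-q^(3:ℤ))*(1-q^(5:ℤ))) * h1
      - ((1-q^(2*k-2))*(1-q^(1:ℤ))*(1-q^(3:ℤ))*(1-q^(5:ℤ))) * h2
  | succ t ih =>
    push_cast
    rw [show 2*(t+1)+1 = 2*t+3 by omega, show 2*(t+1)+3 = 2*t+5 by omega]
    rw [show 2*k-4*((t:ℤ)+1)-2 = 2*k-4*(t:ℤ)-6 by ring,
      show 2*k-4*((t:ℤ)+1)-4 = 2*k-4*(t:ℤ)-8 by ring,
      show 4*((t:ℤ)+1)+5 = 4*(t:ℤ)+9 by ring]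
    rw [Qp_shift' (2*k-4*(t:ℤ)-6) (2*k-4*(t:ℤ)-4) 2 (2*t+2) (2*t+3) rfl (by ring)]
    rw [Qp_shift' (2*k-4*(t:ℤ)-4) (2*k-4*(t:ℤ)-2) 2 (2*t+1) (2*t+2) rfl (by ring)]
    rw [q_split (show 4*((t:ℤ)+1)^2+9*((t:ℤ)+1)+5-2*k*((t:ℤ)+1)-2*k
        = (4*(t:ℤ)^2+9*(t:ℤ)+5-2*k*(t:ℤ)-2*k) + (8*(t:ℤ)+13-2*k) by ring)]
    rw [Qp_succ' 1 2 (4*(t:ℤ)+9) (2*t+4) (2*t+5) rfl (by push_cast; ring),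
      Qp_succ' 1 2 (4*(t:ℤ)+7) (2*t+3) (2*t+4) rfl (by push_cast; ring)]
    rw [Dp_succ, Np_succ]
    rw [q_split (show (2*k-1)*((t:ℤ)+1) = (2*k-1)*(t:ℤ) + (2*k-1) by ring)]
    have hg : (q:K)^(2*k-4*(t:ℤ)-4) - q^(4*(t:ℤ)+5) ≠ 0 := q_sub_ne (by omega)
    apply mul_right_cancel₀ hg
    have f6 : (q:K)^(2*k-4*(t:ℤ)-6)*q^(2*k-4*(t:ℤ)-4)*q^(8*(t:ℤ)+13-2*k)*
        q^(2*k-4*(t:ℤ)-8)*q^(8*(t:ℤ)+9-2*k) = q^(2*k-1)*q^(4*(t:ℤ)+5) := by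
      rw [← zpow_add₀ hq, ← zpow_add₀ hq, ← zpow_add₀ hq, ← zpow_add₀ hq,
        ← zpow_add₀ hq]
      congr 1; ring
    have hXY : (1-q^(2*k-4*(t:ℤ)-6))*(1-q^(2*k-4*(t:ℤ)-4))*q^(8*(t:ℤ)+13-2*k)*
        (q^(2*k-4*(t:ℤ)-8)-q^(4*(t:ℤ)+9))*(1-q^(4*(t:ℤ)+7))*(1-q^(4*(t:ℤ)+9))*
        (1-q^(8*(t:ℤ)+9-2*k))
        = (1-q^(4*(t:ℤ)+7))*(1-q^(4*(t:ℤ)+9))*(1-q^(4*(t:ℤ)+6-2*k))*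
          (1-q^(4*(t:ℤ)+4-2*k))*(1-q^(8*(t:ℤ)+17-2*k))*q^(2*k-1)*
          (q^(2*k-4*(t:ℤ)-4)-q^(4*(t:ℤ)+5)) := by
      rw [q_flip (show (2*k-4*(t:ℤ)-6) + (4*(t:ℤ)+6-2*k) = 0 by ring),
        q_flip (show (2*k-4*(t:ℤ)-4) + (4*(t:ℤ)+4-2*k) = 0 by ring),
        q_subflip (show (4*(t:ℤ)+9) = (2*k-4*(t:ℤ)-8) + (8*(t:ℤ)+17-2*k) by ring),
        q_flip (show (8*(t:ℤ)+9-2*k) + (2*k-8*(t:ℤ)-9) = 0 by ring),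
        q_subflip2 (show (2*k-4*(t:ℤ)-4) = (4*(t:ℤ)+5) + (2*k-8*(t:ℤ)-9) by ring)]
      linear_combination (-((1-q^(4*(t:ℤ)+6-2*k))*(1-q^(4*(t:ℤ)+4-2*k))*
        (1-q^(8*(t:ℤ)+17-2*k))*(1-q^(2*k-8*(t:ℤ)-9))*(1-q^(4*(t:ℤ)+7))*
        (1-q^(4*(t:ℤ)+9)))) * f6
    linear_combination ((1-q^(2*k-4*(t:ℤ)-6))*(1-q^(2*k-4*(t:ℤ)-4))*
        q^(8*(t:ℤ)+13-2*k)*(q^(2*k-4*(t:ℤ)-8)-q^(4*(t:ℤ)+9))*(1-q^(4*(t:ℤ)+7))*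
        (1-q^(4*(t:ℤ)+9))*(1-q^(8*(t:ℤ)+9-2*k))) * ih
      + (Qp 1 2 (2*t+3) * q^(1:ℤ) * (1-q^(2*k-2)) * (1-q^(9-2*k)) * Np k t *
        q^((2*k-1)*(t:ℤ))) * hXY

lemma step_even (t : ℕ) (k : ℤ) (ih : SS k t * PF k (2*t+2) = RT k (2*t+2)) :
    SS k (t+1) * PF k (2*t+3) = RT k (2*t+3) := by
  have hs : SS k (t+1) = SS k t + Np k t / Dp k t * q^((2*k-1)*(t:ℤ)) := by
    rw [SS, Finset.sum_range_succ, summand_eq, ← SS]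
  have hp : PF k (2*t+3) = PF k (2*t+2) * (1 - q^(4*(t:ℤ)+5)) := by
    have h := PF_succ k (2*t+2)
    rw [show (2*t+2)+1 = 2*t+3 by omega,
      show 2*((2*t+2:ℕ):ℤ)+1 = 4*(t:ℤ)+5 by push_cast; ring] at h
    exact h
  have h135 : ((1-q^(1:ℤ))*(1-q^(3:ℤ))*(1-q^(5:ℤ)) : K) ≠ 0 := by
    refine mul_ne_zero (mul_ne_zero ?_ ?_) ?_ <;> exact one_sub_q_zpow_ne (by norm_num)
  have hD := Dp_ne_zero k t
  have hdelta : Np k t / Dp k t * q^((2*k-1)*(t:ℤ)) * PF k (2*t+3)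
      = (1-q^(2*k-1)) * (Qp (2*k-4*(t:ℤ)-2) 2 (2*t+1) *
          q^(4*(t:ℤ)^2+9*(t:ℤ)+5-2*k*(t:ℤ)-2*k) *
          (q^(2*k-4*(t:ℤ)-4) - q^(4*(t:ℤ)+5))) := by
    rw [PF_eq, div_mul_eq_mul_div, div_mul_div_comm,
      div_eq_iff (mul_ne_zero hD h135)]
    linear_combination (-(1-q^(2*k-1))) * starlem t k
  calc SS k (t+1) * PF k (2*t+3)
      = (SS k t * PF k (2*t+2)) * (1-q^(4*(t:ℤ)+5))
        + Np k t / Dp k t * q^((2*k-1)*(t:ℤ)) * PF k (2*t+3) := by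
          rw [hs]; rw [hp]; ring
    _ = RT k (2*t+2) * (1-q^(4*(t:ℤ)+5)) + (1-q^(2*k-1)) *
          (Qp (2*k-4*(t:ℤ)-2) 2 (2*t+1) *
            q^(4*(t:ℤ)^2+9*(t:ℤ)+5-2*k*(t:ℤ)-2*k) *
            (q^(2*k-4*(t:ℤ)-4) - q^(4*(t:ℤ)+5))) := by rw [ih, hdelta]
    _ = RT k (2*t+3) := by
        rw [RT_even, RT_odd3]
        rw [Qp_succ' 3 2 (4*(t:ℤ)+5) (2*t+1) (2*t+2) rfl (by push_cast; ring)]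
        rw [Qp_shift' (2*k-4*(t:ℤ)-6) (2*k-4*(t:ℤ)-4) 2 (2*t+2) (2*t+3) rfl (by ring)]
        rw [Qp_shift' (2*k-4*(t:ℤ)-4) (2*k-4*(t:ℤ)-2) 2 (2*t+1) (2*t+2) rfl (by ring)]
        rw [Qp_succ' 1 2 (4*(t:ℤ)+5) (2*t+2) (2*t+3) rfl (by push_cast; ring)]
        rw [q_split (show (4*(t:ℤ)^2+13*(t:ℤ)+10-2*k*(t:ℤ)-2*k)
            = (4*(t:ℤ)^2+9*(t:ℤ)+5-2*k*(t:ℤ)-2*k) + (4*(t:ℤ)+5) by ring)]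
        have hya : (q:K)^(4*(t:ℤ)+5) * q^(2*k-4*(t:ℤ)-6) = q^(2*k-1) := qmul (by ring)
        linear_combination (-(Qp (2*k-4*(t:ℤ)-2) 2 (2*t+1) *
          q^(4*(t:ℤ)^2+9*(t:ℤ)+5-2*k*(t:ℤ)-2*k) *
          (1-q^(2*k-4*(t:ℤ)-4)))) * hya

theorem main_G : ∀ (t : ℕ) (k : ℤ),
    SS k t * PF k (2*t+1) = RT k (2*t+1) ∧ SS k t * PF k (2*t+2) = RT k (2*t+2) := by
  intro t
  induction t with
  | zero => exact fun k => ⟨G_base k, step_odd 0 k (G_base k)⟩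
  | succ t ih =>
    intro k
    have h1 : SS k (t+1) * PF k (2*(t+1)+1) = RT k (2*(t+1)+1) := by
      rw [show 2*(t+1)+1 = 2*t+3 by omega]
      exact step_even t k (ih k).2
    exact ⟨h1, step_odd (t+1) k h1⟩


/-- The key identity (equation (6) of the paper): for all `n ≥ 1` and `k ≥ 2`,
`(∑_{j=0}^{⌈(n-4)/2⌉} s(n,k,j)) (q;q²)_n q (1-q^{2k-1})(1-q^{2k-2})(1-q^{9-2k})
  /((1-q)(1-q³)(1-q⁵))
 - (1-q^{2k-1})(q³;q²)_{n-1}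
 - (-1)^n q^{(-1+(-1)^n+2k-2(-1)^n k+2n-4kn+4n²)/4} (q^{2k-2n};q²)_n
 + (q;q²)_n
 + χ(n)(1-q^{2k-1}) q^{n(2n-2k+1)/2} (q^{2k-2n+2};q²)_{n-1} = 0`,
where `s(n,k,j) = (q^{-2k+6};q⁴)_j (q^{-2k+4};q⁴)_j (q^{17-2k};q⁸)_j
  / ((q⁷;q⁴)_j (q⁹;q⁴)_j (q^{9-2k};q⁸)_j) · q^{(2k-1)j}`,
`χ(n) = 1` for even `n`, `0` for odd `n`, and the sum has `⌈(n-4)/2⌉ + 1`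
terms, i.e. `(n-1)/2` (rounded down) terms, being empty for `n ≤ 2`. -/
theorem key_identity (n : ℕ) (hn : 1 ≤ n) (k : ℤ) (hk : 2 ≤ k) :
    (∑ j ∈ Finset.range ((n - 1) / 2),
        qpoch (q ^ (-2 * k + 6)) (q ^ 4) j * qpoch (q ^ (-2 * k + 4)) (q ^ 4) j *
          qpoch (q ^ (17 - 2 * k)) (q ^ 8) j /
        (qpoch (q ^ 7) (q ^ 4) j * qpoch (q ^ 9) (q ^ 4) j *
          qpoch (q ^ (9 - 2 * k)) (q ^ 8) j) *
        q ^ ((2 * k - 1) * (j : ℤ))) *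
      (qpoch q (q ^ 2) n * q * (1 - q ^ (2 * k - 1)) * (1 - q ^ (2 * k - 2)) *
        (1 - q ^ (9 - 2 * k)) / ((1 - q) * (1 - q ^ 3) * (1 - q ^ 5)))
    - (1 - q ^ (2 * k - 1)) * qpoch (q ^ 3) (q ^ 2) (n - 1)
    - (-1 : K) ^ n *
        q ^ ((-1 + (-1 : ℤ) ^ n + 2 * k - 2 * (-1 : ℤ) ^ n * k + 2 * (n : ℤ) -
              4 * k * (n : ℤ) + 4 * (n : ℤ) ^ 2) / 4) *
        qpoch (q ^ (2 * k - 2 * (n : ℤ))) (q ^ 2) n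
    + qpoch q (q ^ 2) n
    + (if Even n then (1 : K) else 0) * (1 - q ^ (2 * k - 1)) *
        q ^ ((n : ℤ) * (2 * (n : ℤ) - 2 * k + 1) / 2) *
        qpoch (q ^ (2 * k - 2 * (n : ℤ) + 2)) (q ^ 2) (n - 1)
    = 0 := by
  have h : SS k ((n-1)/2) * PF k n = RT k n := by
    rcases Nat.even_or_odd n with he | ho
    · obtain ⟨t, rfl⟩ : ∃ t, n = 2*t+2 := by
        obtain ⟨s, hs⟩ := he; exact ⟨s - 1, by omega⟩
      rw [show (2*t+2-1)/2 = t by omega]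
      exact (main_G t k).2
    · obtain ⟨t, rfl⟩ := ho
      rw [show (2*t+1-1)/2 = t by omega]
      exact (main_G t k).1
  simp only [SS, PF, RT, E, F] at h
  linear_combination h
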